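/- Let F : [0,∞) → ℝ be defined by F(s) = 3k − (3k² + 2k)/(4·log(2)·s) if k/(2 log 2) ≤ s < (k+1)/(2 log 2) with k ∈ ℕ₀ even (and F(0) = 0), and F(s) = 3k + 1 − (3k² + 4k + 1)/(4·log(2)·s) if k/(2 log 2) ≤ s < (k+1)/(2 log 2) with k ∈ ℕ odd. Then the set of all s ≥ 0 satisfying F(s) = 2s is exactly {0, s₁}, where s₁ = (52·log(2) − √(2704·log(2)² − 1872·log(2))) / (4·log(2)). -/

import Mathlib

/-- The limiting pair correlation function `F(s)` of the sequence `{log(2n-1)/log 2}`: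
for `s` with `k/(2 log 2) ≤ s < (k+1)/(2 log 2)` (i.e. `k = ⌊2·log 2·s⌋`),
`F(s) = 3k - (3k²+2k)/(4 log 2 · s)` for even `k` and
`F(s) = 3k + 1 - (3k²+4k+1)/(4 log 2 · s)` for odd `k` (with `F(0) = 0`). -/
noncomputable def Flim (s : ℝ) : ℝ :=
  let k : ℤ := ⌊2 * Real.log 2 * s⌋
  if Even k then 3 * (k : ℝ) - (3 * (k : ℝ) ^ 2 + 2 * k) / (4 * Real.log 2 * s)
  else 3 * (k : ℝ) + 1 - (3 * (k : ℝ) ^ 2 + 4 * k + 1) / (4 * Real.log 2 * s)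

lemma Flim_def (s : ℝ) : Flim s =
    if Even ⌊2 * Real.log 2 * s⌋ then
      3 * ((⌊2 * Real.log 2 * s⌋ : ℤ) : ℝ) -
        (3 * ((⌊2 * Real.log 2 * s⌋ : ℤ) : ℝ) ^ 2 + 2 * ((⌊2 * Real.log 2 * s⌋ : ℤ) : ℝ)) /
          (4 * Real.log 2 * s)
    else 3 * ((⌊2 * Real.log 2 * s⌋ : ℤ) : ℝ) + 1 -
        (3 * ((⌊2 * Real.log 2 * s⌋ : ℤ) : ℝ) ^ 2 + 4 * ((⌊2 * Real.log 2 * s⌋ : ℤ) : ℝ) + 1) /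
          (4 * Real.log 2 * s) := rfl

lemma hL1 : (9:ℝ)/13 < Real.log 2 := by
  have := Real.log_two_gt_d9; norm_num at this ⊢; linarith
lemma hL2 : Real.log 2 < 25/36 := by
  have := Real.log_two_lt_d9; norm_num at this ⊢; linarith

set_option maxHeartbeats 1000000 in
lemma forward (s : ℝ) (hs0 : 0 ≤ s) (heq : Flim s = 2 * s) :
    s = 0 ∨ s = (52 * Real.log 2 - Real.sqrt (2704 * Real.log 2 ^ 2 - 1872 * Real.log 2)) /
          (4 * Real.log 2) := by
  rcases eq_or_lt_of_le hs0 with h | hs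
  · left; exact h.symm
  right
  rw [Flim_def] at heq
  set L := Real.log 2 with hLdef
  have h1 : (9:ℝ)/13 < L := hL1
  have h2 : L < 25/36 := hL2
  have hLpos : (0:ℝ) < L := by linarith
  set k : ℤ := ⌊2 * L * s⌋ with hk
  have hkle : (k:ℝ) ≤ 2*L*s := Int.floor_le _
  have hklt : 2*L*s < (k:ℝ) + 1 := Int.lt_floor_add_one _
  have hupos : (0:ℝ) < 2*L*s := by positivity
  have hk0 : 0 ≤ k := Int.floor_nonneg.mpr (le_of_lt hupos)
  have h4ne : 4*L*s ≠ 0 := by positivity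
  by_cases hke : Even k
  · -- even case : contradiction
    exfalso
    rw [if_pos hke] at heq
    have heq2 : (3*((k:ℤ):ℝ)^2 + 2*((k:ℤ):ℝ)) = (3*((k:ℤ):ℝ) - 2*s) * (4*L*s) := by
      rw [← div_eq_iff h4ne]; linarith
    have hke' : k % 2 = 0 := Int.even_iff.mp hke
    have hcase : k = 0 ∨ (2 ≤ k ∧ k ≤ 16) ∨ 18 ≤ k := by omega
    rcases hcase with h0 | ⟨ha, hb⟩ | hc
    · rw [h0] at heq2; push_cast at heq2
      nlinarith [mul_pos hLpos (mul_pos hs hs)]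
    · have hKa : (2:ℝ) ≤ (k:ℝ) := by exact_mod_cast ha
      have hKb : ((k:ℝ)) ≤ 16 := by exact_mod_cast hb
      have hd : 144*(k:ℝ)^2*L^2 - 32*L*(3*(k:ℝ)^2+2*(k:ℝ)) ≥ 0 := by
        nlinarith [sq_nonneg (16*L*s - 12*(k:ℝ)*L), heq2]
      nlinarith [hd, mul_pos (mul_pos hLpos hLpos) (mul_pos (by linarith : (0:ℝ) < (k:ℝ)) (by linarith : (0:ℝ) < (k:ℝ))),
        mul_nonneg (mul_nonneg hLpos.le (by linarith : (0:ℝ) ≤ (k:ℝ))) (by linarith : (0:ℝ) ≤ 16 - (k:ℝ)),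
        mul_pos hLpos (by linarith : (0:ℝ) < (k:ℝ))]
    · have hKc : (18:ℝ) ≤ (k:ℝ) := by exact_mod_cast hc
      set K := ((k:ℤ):ℝ) with hK
      have hg : 2*(2*L*s)^2 - 6*K*L*(2*L*s) + L*(3*K^2+2*K) = 0 := by
        linear_combination L * heq2
      have hA : (0:ℝ) ≤ 2*L*s - K := by linarith
      have hB : (0:ℝ) < K + 1 - 2*L*s := by linarith
      have hgK : K*((2-3*L)*K+2*L) < 0 := by
        nlinarith [mul_pos (by linarith : (0:ℝ) < K) (by linarith : (0:ℝ) < 52*L - 36)]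
      have hgK1 : (2-3*L)*K^2+(4-4*L)*K+2 < 0 := by
        nlinarith [mul_nonneg (by linarith : (0:ℝ) ≤ 3*L-2) (sq_nonneg (K-18)),
          mul_nonneg (by linarith : (0:ℝ) ≤ 112*L-76) (by linarith : (0:ℝ) ≤ K-18)]
      nlinarith [hg, mul_nonneg hA hB.le, mul_pos (neg_pos.mpr hgK) hB,
        mul_nonneg (neg_nonneg.mpr hgK1.le) hA]
  · -- odd case
    rw [if_neg hke] at heq
    have heq2 : (3*((k:ℤ):ℝ)^2 + 4*((k:ℤ):ℝ) + 1) = (3*((k:ℤ):ℝ) + 1 - 2*s) * (4*L*s) := by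
      rw [← div_eq_iff h4ne]; linarith
    have hke' : k % 2 = 1 := Int.odd_iff.mp (Int.not_even_iff_odd.mp hke)
    have hcase : (1 ≤ k ∧ k ≤ 15) ∨ k = 17 ∨ 19 ≤ k := by omega
    rcases hcase with ⟨ha, hb⟩ | h17 | hc
    · exfalso
      have hKa : (1:ℝ) ≤ (k:ℝ) := by exact_mod_cast ha
      have hKb : ((k:ℝ)) ≤ 15 := by exact_mod_cast hb
      have hP : (0:ℝ) < 3*(k:ℝ)+1 := by linarith
      have hd : (12*(k:ℝ)+4)^2*L^2 - 32*L*(3*(k:ℝ)^2+4*(k:ℝ)+1) ≥ 0 := by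
        nlinarith [sq_nonneg (16*L*s - (12*(k:ℝ)+4)*L), heq2]
      have hPL : (3*(k:ℝ)+1)*L ≥ 2*((k:ℝ)+1) := by
        nlinarith [hd, mul_pos hLpos hP]
      nlinarith [hPL, mul_pos (by linarith : (0:ℝ) < 25/36 - L) hP]
    · -- k = 17 : the solution
      rw [h17] at heq2 hkle hklt
      push_cast at heq2 hkle hklt
      have hnn : (0:ℝ) ≤ 52*L - 4*L*s := by linarith
      have hsq : 2704*L^2 - 1872*L = (52*L - 4*L*s)^2 := by linear_combination (-2*L) * heq2
      have hRs : Real.sqrt (2704*L^2 - 1872*L) = 52*L - 4*L*s := by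
        rw [hsq, Real.sqrt_sq hnn]
      rw [hRs]
      field_simp
      ring
    · exfalso
      have hKc : (19:ℝ) ≤ (k:ℝ) := by exact_mod_cast hc
      set K := ((k:ℤ):ℝ) with hK
      have hg : 2*(2*L*s)^2 - (6*K+2)*L*(2*L*s) + L*(3*K^2+4*K+1) = 0 := by
        linear_combination L * heq2
      have hA : (0:ℝ) ≤ 2*L*s - K := by linarith
      have hB : (0:ℝ) < K + 1 - 2*L*s := by linarith
      have hgK : (2-3*L)*K^2 + 2*K*L + L < 0 := by
        nlinarith [mul_nonneg (by linarith : (0:ℝ) ≤ 3*L-2) (sq_nonneg (K-19)),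
          mul_nonneg (by linarith : (0:ℝ) ≤ 112*L-76) (by linarith : (0:ℝ) ≤ K-19)]
      have hgK1 : (K+1)*((2-3*L)*K + 2 - L) < 0 := by
        nlinarith [mul_pos (by linarith : (0:ℝ) < K+1) (by linarith : (0:ℝ) < 58*L - 40)]
      nlinarith [hg, mul_nonneg hA hB.le, mul_pos (neg_pos.mpr hgK) hB,
        mul_nonneg (neg_nonneg.mpr hgK1.le) hA]


lemma Flim_zero : Flim 0 = 0 := by
  unfold Flim
  norm_num

-- bounds on R
lemma hRsq : Real.sqrt (2704 * Real.log 2 ^ 2 - 1872 * Real.log 2) ^ 2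
    = 2704 * Real.log 2 ^ 2 - 1872 * Real.log 2 := by
  have hL1 := hL1
  rw [Real.sq_sqrt]
  nlinarith [hL1]

lemma hRlb : 52 * Real.log 2 - 36 < Real.sqrt (2704 * Real.log 2 ^ 2 - 1872 * Real.log 2) := by
  have h1 := hL1; have h2 := hL2
  have hnn := Real.sqrt_nonneg (2704 * Real.log 2 ^ 2 - 1872 * Real.log 2)
  nlinarith [hRsq, hnn]

lemma hRub : Real.sqrt (2704 * Real.log 2 ^ 2 - 1872 * Real.log 2) < 52 * Real.log 2 - 34 := by
  have h1 := hL1; have h2 := hL2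
  have hnn := Real.sqrt_nonneg (2704 * Real.log 2 ^ 2 - 1872 * Real.log 2)
  nlinarith [hRsq, hnn]

lemma floor_s1 :
    ⌊2 * Real.log 2 * ((52 * Real.log 2 - Real.sqrt (2704 * Real.log 2 ^ 2 - 1872 * Real.log 2)) /
          (4 * Real.log 2))⌋ = 17 := by
  have h1 := hL1; have h2 := hL2
  have hLpos : (0:ℝ) < Real.log 2 := by linarith
  have key : 2 * Real.log 2 * ((52 * Real.log 2 - Real.sqrt (2704 * Real.log 2 ^ 2 - 1872 * Real.log 2)) /
          (4 * Real.log 2)) = (52 * Real.log 2 - Real.sqrt (2704 * Real.log 2 ^ 2 - 1872 * Real.log 2)) / 2 := by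
    field_simp; ring
  rw [key]
  rw [Int.floor_eq_iff]
  constructor
  · have := hRub; push_cast; linarith
  · have := hRlb; push_cast; linarith

lemma Flim_s1 : Flim ((52 * Real.log 2 - Real.sqrt (2704 * Real.log 2 ^ 2 - 1872 * Real.log 2)) /
          (4 * Real.log 2)) = 2 * ((52 * Real.log 2 - Real.sqrt (2704 * Real.log 2 ^ 2 - 1872 * Real.log 2)) /
          (4 * Real.log 2)) := by
  have h1 := hL1; have h2 := hL2
  have hLpos : (0:ℝ) < Real.log 2 := by linarith
  unfold Flim
  rw [floor_s1]
  rw [if_neg (by decide)]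
  have hs1pos : (0:ℝ) < 52 * Real.log 2 - Real.sqrt (2704 * Real.log 2 ^ 2 - 1872 * Real.log 2) := by
    have := hRub; linarith
  have hR := hRsq
  set R := Real.sqrt (2704 * Real.log 2 ^ 2 - 1872 * Real.log 2) with hRdef
  push_cast
  have hne : 52 * Real.log 2 - R ≠ 0 := ne_of_gt hs1pos
  have hne' : Real.log 2 * 52 - R ≠ 0 := by intro h; apply hne; linarith
  field_simp
  nlinarith [hR]


theorem solutions_of_F_eq_two_s :
    {s : ℝ | 0 ≤ s ∧ Flim s = 2 * s} =
      {0, (52 * Real.log 2 - Real.sqrt (2704 * Real.log 2 ^ 2 - 1872 * Real.log 2)) /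
          (4 * Real.log 2)} := by
  ext s
  simp only [Set.mem_setOf_eq, Set.mem_insert_iff, Set.mem_singleton_iff]
  constructor
  · rintro ⟨hs0, heq⟩
    exact forward s hs0 heq
  · rintro (rfl | rfl)
    · exact ⟨le_refl 0, by rw [Flim_zero]; ring⟩
    · refine ⟨?_, Flim_s1⟩
      have h1 := hL1
      have h2 := hRub
      apply div_nonneg ?_ (by linarith)
      linarith
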